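/- Let p be a natural number, m = 2^p, and let X < 2^(2m) be a natural number, with high half X_H = X / 2^m and low half X_L = X % 2^m. Then LZC_{2m}(X) = LZC_m(X_H) + (if (LZC_m(X_H)).testBit p = true then LZC_m(X_L) else 0); that is, the merge circuit's conditional addition, controlled by the flag bit of the high-half count, computes the leading-zero count of the full 2m-bit word. -/

import Mathlib

/-- The `m`-bit leading-zero count: `m` if `X = 0`, otherwise the least `γ`
such that `X.testBit (m - 1 - γ) = true`. -/
noncomputable def LZC (m X : ℕ) : ℕ :=
  if X = 0 then m else sInf {γ : ℕ | X.testBit (m - 1 - γ) = true}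

lemma testBit_div_pow (x n k : ℕ) : (x / 2^n).testBit k = x.testBit (n + k) := by
  rw [← Nat.shiftRight_eq_div_pow, Nat.testBit_shiftRight]

lemma LZC_spec (m X : ℕ) (hX : X < 2 ^ m) (h0 : X ≠ 0) :
    LZC m X ≤ m - 1 ∧ X.testBit (m - 1 - LZC m X) = true := by
  obtain ⟨i, hi, _⟩ := Nat.exists_most_significant_bit h0
  have him : i < m := by
    by_contra h
    have : X < 2 ^ i := lt_of_lt_of_le hX (Nat.pow_le_pow_right (by norm_num) (not_lt.mp h))
    simp [Nat.testBit_lt_two_pow this] at hi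
  have hmem : (m - 1 - i) ∈ {γ : ℕ | X.testBit (m - 1 - γ) = true} := by
    have : m - 1 - (m - 1 - i) = i := by omega
    simp only [Set.mem_setOf_eq, this]; exact hi
  have hne : {γ : ℕ | X.testBit (m - 1 - γ) = true}.Nonempty := ⟨_, hmem⟩
  have h1 : LZC m X ≤ m - 1 - i := by
    simpa [LZC, h0] using Nat.sInf_le hmem
  have h2 := Nat.sInf_mem hne
  constructor
  · omega
  · simpa [LZC, h0] using h2

theorem stmt_12 (p m X : ℕ) (hm : m = 2 ^ p) (hX : X < 2 ^ (2 * m)) :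
    LZC (2 * m) X =
      LZC m (X / 2 ^ m) +
        (if (LZC m (X / 2 ^ m)).testBit p = true then LZC m (X % 2 ^ m) else 0) := by
  have hmpos : 0 < m := hm ▸ Nat.two_pow_pos p
  have hHlt : X / 2 ^ m < 2 ^ m := by
    apply Nat.div_lt_of_lt_mul
    rw [← pow_add, show m + m = 2 * m by ring]
    exact hX
  by_cases hH : X / 2 ^ m = 0
  · -- high half zero
    have hXlt : X < 2 ^ m := by
      rcases Nat.lt_or_ge X (2 ^ m) with h | h
      · exact h
      · exact absurd hH (by
          have : 1 ≤ X / 2 ^ m := Nat.one_le_div_iff (Nat.two_pow_pos m) |>.mpr h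
          omega)
    have hmod : X % 2 ^ m = X := Nat.mod_eq_of_lt hXlt
    have hLH : LZC m (X / 2 ^ m) = m := by simp [LZC, hH]
    have hbit : m.testBit p = true := by
      rw [hm]; exact Nat.testBit_two_pow_self
    rw [hLH, hbit, if_pos rfl, hmod]
    by_cases h0 : X = 0
    · simp [LZC, h0]; ring
    · -- LZC (2m) X = m + LZC m X
      obtain ⟨hle, hbit2⟩ := LZC_spec m X hXlt h0
      have hne2 : {γ : ℕ | X.testBit (2 * m - 1 - γ) = true}.Nonempty := by
        refine ⟨m + LZC m X, ?_⟩
        have : 2 * m - 1 - (m + LZC m X) = m - 1 - LZC m X := by omega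
        simp only [Set.mem_setOf_eq, this]; exact hbit2
      have key : LZC (2 * m) X = m + LZC m X := by
        have hmem2 := Nat.sInf_mem hne2
        have hle2 : sInf {γ : ℕ | X.testBit (2 * m - 1 - γ) = true} ≤ m + LZC m X :=
          Nat.sInf_le hne2.choose_spec |> fun _ => Nat.sInf_le (by
            have : 2 * m - 1 - (m + LZC m X) = m - 1 - LZC m X := by omega
            simp only [Set.mem_setOf_eq, this]; exact hbit2)
        set s := sInf {γ : ℕ | X.testBit (2 * m - 1 - γ) = true} with hs
        -- s ≥ m since bits above m are zero
        have hge : m ≤ s := by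
          by_contra h
          push_neg at h
          have : 2 * m - 1 - s ≥ m := by omega
          have : X.testBit (2 * m - 1 - s) = false :=
            Nat.testBit_lt_two_pow (lt_of_lt_of_le hXlt
              (Nat.pow_le_pow_right (by norm_num) this))
          simp only [Set.mem_setOf_eq] at hmem2
          rw [hmem2] at this; simp at this
        -- s - m is in the small set, so LZC m X ≤ s - m
        have hmem3 : X.testBit (m - 1 - (s - m)) = true := by
          have : m - 1 - (s - m) = 2 * m - 1 - s := by omega
          rw [this]; exact hmem2
        have : LZC m X ≤ s - m := by
          simpa [LZC, h0] using Nat.sInf_le (show (s - m) ∈ {γ : ℕ | X.testBit (m - 1 - γ) = true} from hmem3)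
        have hfin : LZC (2 * m) X = s := by simp [LZC, h0, hs]
        have h3 : LZC m X = sInf {γ : ℕ | X.testBit (m - 1 - γ) = true} := by
          simp [LZC, h0]
        omega
      rw [key]
  · -- high half nonzero
    have hX0 : X ≠ 0 := fun h => hH (by simp [h])
    obtain ⟨hle, hbitH⟩ := LZC_spec m (X / 2 ^ m) hHlt hH
    have hLHlt : LZC m (X / 2 ^ m) < 2 ^ p := by omega
    have hbit : (LZC m (X / 2 ^ m)).testBit p = false := Nat.testBit_lt_two_pow hLHlt
    rw [hbit]
    simp only [Bool.false_eq_true, if_false, add_zero]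
    -- show LZC (2m) X = LZC m X_H
    set L := LZC m (X / 2 ^ m) with hL
    have hbig : X.testBit (2 * m - 1 - L) = true := by
      have : 2 * m - 1 - L = m + (m - 1 - L) := by omega
      rw [this, ← testBit_div_pow]; exact hbitH
    have hne2 : {γ : ℕ | X.testBit (2 * m - 1 - γ) = true}.Nonempty := ⟨L, hbig⟩
    have hle2 : sInf {γ : ℕ | X.testBit (2 * m - 1 - γ) = true} ≤ L := Nat.sInf_le hbig
    set s := sInf {γ : ℕ | X.testBit (2 * m - 1 - γ) = true} with hs
    have hmem2 : X.testBit (2 * m - 1 - s) = true := Nat.sInf_mem hne2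
    have hsmall : (X / 2 ^ m).testBit (m - 1 - s) = true := by
      rw [testBit_div_pow]
      have : m + (m - 1 - s) = 2 * m - 1 - s := by omega
      rw [this]; exact hmem2
    have hge : L ≤ s := by
      have h := Nat.sInf_le (show s ∈ {γ : ℕ | (X / 2 ^ m).testBit (m - 1 - γ) = true} from hsmall)
      rw [hL]; unfold LZC; rw [if_neg hH]; exact h
    have : LZC (2 * m) X = s := by simp [LZC, hX0, ← hs]
    omega
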